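/- Let K be a field, Λ a finite-dimensional K-algebra, and let 0 → A →f B →g U → 0 be an almost split sequence of finite-dimensional left Λ-modules in which U is uniserial. Suppose B is the internal direct sum of a family (Bᵢ)_{i ∈ I} of indecomposable submodules, and for each i let gᵢ : Bᵢ → U denote the restriction of g to Bᵢ. Then there is at most one index i ∈ I for which gᵢ is injective; that is, if gᵢ and gⱼ are both injective then i = j. -/

import Mathlib

/-- A module is *uniserial* if its submodules are totally ordered by inclusion. -/
def IsUniserialModule (R M : Type) [Ring R] [AddCommGroup M] [Module R M] : Prop :=
  ∀ N₁ N₂ : Submodule R M, N₁ ≤ N₂ ∨ N₂ ≤ N₁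

/-- The Jacobson radical of the ring `R` (the intersection of the maximal left ideals). -/
noncomputable def ringJacobson (R : Type) [Ring R] : Ideal R :=
  Ideal.jacobson (⊥ : Ideal R)

/-- The submodule `J•M`, where `J` is the Jacobson radical of `R`. -/
noncomputable def radicalSubmodule (R M : Type) [Ring R] [AddCommGroup M] [Module R M] :
    Submodule R M :=
  ringJacobson R • (⊤ : Submodule R M)

/-- The socle of a module: the sum of all of its simple submodules. -/
def socle (R M : Type) [Ring R] [AddCommGroup M] [Module R M] : Submodule R M :=
  sSup {N : Submodule R M | IsSimpleModule R ↥N}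

/-- A linear map is a split monomorphism if it has a left inverse. -/
def IsSplitMono {R M N : Type} [Ring R] [AddCommGroup M] [Module R M]
    [AddCommGroup N] [Module R N] (f : M →ₗ[R] N) : Prop :=
  ∃ g : N →ₗ[R] M, g ∘ₗ f = LinearMap.id

/-- A linear map is a split epimorphism if it has a right inverse. -/
def IsSplitEpi {R M N : Type} [Ring R] [AddCommGroup M] [Module R M]
    [AddCommGroup N] [Module R N] (f : M →ₗ[R] N) : Prop :=
  ∃ g : N →ₗ[R] M, f ∘ₗ g = LinearMap.id

/-- A linear map `f : M → N` is *irreducible* if it is neither a split monomorphism nor a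
split epimorphism, and in any factorization `f = g ∘ h`, either `h` is a split monomorphism
or `g` is a split epimorphism. -/
def IsIrreducibleMap {R M N : Type} [Ring R] [AddCommGroup M] [Module R M]
    [AddCommGroup N] [Module R N] (f : M →ₗ[R] N) : Prop :=
  ¬ IsSplitMono f ∧ ¬ IsSplitEpi f ∧
    ∀ (X : Type) [AddCommGroup X] [Module R X] (h : M →ₗ[R] X) (g : X →ₗ[R] N),
      g ∘ₗ h = f → IsSplitMono h ∨ IsSplitEpi g

/-- A module is *indecomposable* if it is nonzero and is not the internal direct sum of two
nonzero submodules. -/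
def IsIndecomposableModule (R M : Type) [Ring R] [AddCommGroup M] [Module R M] : Prop :=
  Nontrivial M ∧ ∀ N₁ N₂ : Submodule R M, IsCompl N₁ N₂ → N₁ = ⊥ ∨ N₂ = ⊥

/-- The composition length of a module, as the Krull dimension of its lattice of
submodules (the supremum of the lengths of strictly increasing chains of submodules). -/
noncomputable def moduleLength (R M : Type) [Ring R] [AddCommGroup M] [Module R M] :
    WithBot ℕ∞ :=
  Order.krullDim (Submodule R M)

/-- `0 → A →f B →g C → 0` is an *almost split sequence* if it is a non-split short exact
sequence, `A` and `C` are indecomposable, and every linear map `h : X → C` which is not a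
split epimorphism factors through `g`. -/
def IsAlmostSplitSequence {Λ A B C : Type} [Ring Λ]
    [AddCommGroup A] [Module Λ A] [AddCommGroup B] [Module Λ B]
    [AddCommGroup C] [Module Λ C]
    (f : A →ₗ[Λ] B) (g : B →ₗ[Λ] C) : Prop :=
  Function.Injective f ∧ Function.Surjective g ∧ LinearMap.range f = LinearMap.ker g ∧
    ¬ IsSplitEpi g ∧ IsIndecomposableModule Λ A ∧ IsIndecomposableModule Λ C ∧
    ∀ (X : Type) [AddCommGroup X] [Module Λ X] (h : X →ₗ[Λ] C),
      ¬ IsSplitEpi h → ∃ h' : X →ₗ[Λ] B, g ∘ₗ h' = h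

/-- In an almost split sequence `0 → A → B → U → 0` of finite-dimensional modules over a
finite-dimensional algebra with `U` uniserial, given an internal direct sum decomposition of
`B` into indecomposable submodules `Bᵢ`, at most one of the restrictions `gᵢ : Bᵢ → U` of
`g` is injective. -/
private lemma amoic_key
    (K Λ A B U : Type) [Field K] [Ring Λ] [Algebra K Λ] [FiniteDimensional K Λ]
    [AddCommGroup A] [Module Λ A] [Module.Finite Λ A]
    [AddCommGroup B] [Module Λ B] [Module.Finite Λ B]
    [AddCommGroup U] [Module Λ U] [Module.Finite Λ U]
    (f : A →ₗ[Λ] B) (g : B →ₗ[Λ] U) (hseq : IsAlmostSplitSequence f g)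
    (I : Type) [DecidableEq I] (B' : I → Submodule Λ B)
    (hint : DirectSum.IsInternal B')
    (hind : ∀ i, IsIndecomposableModule Λ ↥(B' i))
    (i j : I) (hne : i ≠ j)
    (hj : Function.Injective (g ∘ₗ (B' j).subtype))
    (hle : LinearMap.range (g ∘ₗ (B' i).subtype) ≤ LinearMap.range (g ∘ₗ (B' j).subtype)) :
    False := by
  obtain ⟨hfinj, hgsurj, hrf, hnse, hAind, hUind, hfac⟩ := hseq
  set gi : ↥(B' i) →ₗ[Λ] U := g ∘ₗ (B' i).subtype with hgi
  set gj : ↥(B' j) →ₗ[Λ] U := g ∘ₗ (B' j).subtype with hgj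
  -- the comparison map `φ : Bᵢ → Bⱼ` with `gⱼ ∘ φ = gᵢ`
  let e : ↥(B' j) ≃ₗ[Λ] ↥(LinearMap.range gj) := LinearEquiv.ofInjective gj hj
  let φ : ↥(B' i) →ₗ[Λ] ↥(B' j) :=
    e.symm.toLinearMap ∘ₗ LinearMap.codRestrict (LinearMap.range gj) gi
      (fun x => hle (LinearMap.mem_range_self gi x))
  have hφ : ∀ x : ↥(B' i), gj (φ x) = gi x := by
    intro x
    have h1 : ∀ z : ↥(B' j), gj z = ((e z : ↥(LinearMap.range gj)) : U) := fun z => by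
      simp [e, LinearEquiv.ofInjective_apply]
    show gj (e.symm _) = gi x
    rw [h1, e.apply_symm_apply]
    simp
  -- the decomposition equivalence and the projection onto `Bᵢ`
  let E : (DirectSum I fun k => ↥(B' k)) ≃ₗ[Λ] B := LinearEquiv.ofBijective (DirectSum.coeLinearMap B') hint
  let π : B →ₗ[Λ] ↥(B' i) :=
    (DirectSum.component Λ I (fun k => ↥(B' k)) i) ∘ₗ E.symm.toLinearMap
  have hπ : ∀ x : B, π x = E.symm x i := fun x => rfl
  -- the endomorphism θ
  let θ : B →ₗ[Λ] B := LinearMap.id - ((B' i).subtype ∘ₗ π) + ((B' j).subtype ∘ₗ φ ∘ₗ π)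
  have hθapply : ∀ x : B, θ x = x - ((π x : B)) + ((φ (π x) : B)) := fun x => rfl
  have hgθ : g ∘ₗ θ = g := by
    ext x
    show g (x - ((π x : B)) + ((φ (π x) : B))) = g x
    have h1 : g ((φ (π x) : B)) = g ((π x : B)) := hφ (π x)
    rw [map_add, map_sub, h1, sub_add_cancel]
  -- the "small" submodule S
  set S : Submodule Λ B := ⨆ (k) (_ : k ≠ i), B' k with hS
  have hBiS : ¬ B' i ≤ S := by
    intro h
    have hd := hint.submodule_iSupIndep i
    have hbot : B' i = ⊥ := le_bot_iff.mp (hd le_rfl h)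
    exact (Submodule.nontrivial_iff_ne_bot.mp (hind i).1) hbot
  have hBjS : B' j ≤ S := le_iSup₂ (f := fun k (_ : k ≠ i) => B' k) j (Ne.symm hne)
  have hθx : ∀ x : B, θ x ∈ S := by
    intro x
    have key : ∀ d : DirectSum I fun k => ↥(B' k), E d - ((d i : B)) ∈ S := by
      intro d
      induction d using DirectSum.induction_on with
      | zero => simp
      | of k a =>
        have hE : E (DirectSum.of (fun k => ↥(B' k)) k a) = (a : B) :=
          DirectSum.coeLinearMap_of B' k a
        by_cases hk : k = i
        · subst hk
          rw [hE, DirectSum.of_eq_same, sub_self]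
          exact zero_mem S
        · rw [hE, DirectSum.of_eq_of_ne _ _ _ (Ne.symm hk)]
          simpa using (le_iSup₂ (f := fun k (_ : k ≠ i) => B' k) k hk) a.2
      | add d1 d2 h1 h2 =>
        rw [map_add, DirectSum.add_apply, Submodule.coe_add, add_sub_add_comm]
        exact add_mem h1 h2
    have h1 : x - ((π x : B)) ∈ S := by
      have := key (E.symm x)
      rwa [E.apply_symm_apply, ← hπ x] at this
    have h2 : ((φ (π x) : B)) ∈ S := hBjS (φ (π x)).2
    rw [hθapply]
    exact add_mem h1 h2
  have hrθ : LinearMap.range θ ≤ S := by rintro _ ⟨x, rfl⟩; exact hθx x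
  -- instances: B has finite length over Λ
  letI : Module K B := Module.compHom B (algebraMap K Λ)
  haveI : IsScalarTower K Λ B :=
    ⟨fun k l b => by
      show ((k • l) • b : B) = (algebraMap K Λ k) • (l • b)
      rw [Algebra.smul_def, mul_smul]⟩
  haveI : Module.Finite K B := Module.Finite.trans Λ B
  haveI : IsNoetherian Λ B := isNoetherian_of_tower K inferInstance
  haveI : IsArtinian Λ B := isArtinian_of_tower K inferInstance
  -- Fitting decomposition
  obtain ⟨n, hn1, hcompl⟩ :
      ∃ n, 1 ≤ n ∧ IsCompl (LinearMap.ker (θ ^ n)) (LinearMap.range (θ ^ n)) := by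
    obtain ⟨m, hm⟩ :=
      Filter.eventually_atTop.mp (LinearMap.eventually_isCompl_ker_pow_range_pow θ)
    exact ⟨max m 1, le_max_right _ _, hm _ (le_max_left _ _)⟩
  have hgpow : ∀ m : ℕ, g ∘ₗ (θ ^ m) = g := by
    intro m
    induction m with
    | zero => rw [pow_zero, Module.End.one_eq_id, LinearMap.comp_id]
    | succ m ih => rw [pow_succ, Module.End.mul_eq_comp, ← LinearMap.comp_assoc, ih, hgθ]
  have hDker : LinearMap.ker (θ ^ n) ≤ LinearMap.ker g := by
    intro x hx
    rw [LinearMap.mem_ker] at hx ⊢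
    have hgx : g ((θ ^ n) x) = g x := LinearMap.ext_iff.mp (hgpow n) x
    rw [← hgx, hx, map_zero]
  have hDne : LinearMap.ker (θ ^ n) ≠ ⊥ := by
    intro hbot
    have hCtop : LinearMap.range (θ ^ n) = ⊤ := by
      have := hcompl.sup_eq_top
      rwa [hbot, bot_sup_eq] at this
    obtain ⟨m, rfl⟩ : ∃ m, n = m + 1 := ⟨n - 1, (Nat.succ_pred_eq_of_pos hn1).symm⟩
    have h1 : LinearMap.range (θ ^ (m + 1)) ≤ LinearMap.range θ := by
      rw [pow_succ', Module.End.mul_eq_comp]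
      exact LinearMap.range_comp_le_range _ _
    exact hBiS (le_trans (le_trans le_top (hCtop ▸ h1)) hrθ)
  -- indecomposability of A forces `range (θ^n) ⊓ ker g = ⊥`
  set R : Submodule Λ B := LinearMap.ker g with hR
  let eA : A ≃ₗ[Λ] ↥R := (LinearEquiv.ofInjective f hfinj).trans (LinearEquiv.ofEq _ _ hrf)
  set D₀ : Submodule Λ ↥R := (LinearMap.ker (θ ^ n)).comap R.subtype with hD₀
  set C₀ : Submodule Λ ↥R := (LinearMap.range (θ ^ n) ⊓ R).comap R.subtype with hC₀
  have hDC : LinearMap.ker (θ ^ n) ⊓ LinearMap.range (θ ^ n) = ⊥ :=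
    disjoint_iff.mp hcompl.disjoint
  have hcompl₀ : IsCompl D₀ C₀ := by
    constructor
    · rw [disjoint_iff, Submodule.eq_bot_iff]
      rintro x ⟨hx1, hx2, _⟩
      have hmem : (x : B) ∈ LinearMap.ker (θ ^ n) ⊓ LinearMap.range (θ ^ n) := ⟨hx1, hx2⟩
      rw [hDC, Submodule.mem_bot] at hmem
      exact Subtype.ext hmem
    · rw [codisjoint_iff, eq_top_iff]
      rintro ⟨x, hxR⟩ -
      have hx : x ∈ LinearMap.ker (θ ^ n) ⊔ LinearMap.range (θ ^ n) := by
        rw [hcompl.sup_eq_top]; trivial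
      obtain ⟨d, hd, c, hc, hdc⟩ := Submodule.mem_sup.mp hx
      have hdR : d ∈ R := hDker hd
      have hcR : c ∈ R := by
        have hce : c = x - d := by rw [← hdc]; abel
        rw [hce]; exact sub_mem hxR hdR
      exact Submodule.mem_sup.mpr ⟨⟨d, hdR⟩, hd, ⟨c, hcR⟩, ⟨hc, hcR⟩, Subtype.ext hdc⟩
  have hD₀C₀ :=
    hAind.2 ((Submodule.orderIsoMapComap eA).symm D₀) ((Submodule.orderIsoMapComap eA).symm C₀)
      ((Submodule.orderIsoMapComap eA).symm.isCompl hcompl₀)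
  have hCR : LinearMap.range (θ ^ n) ⊓ R = ⊥ := by
    rcases hD₀C₀ with h | h
    · exfalso
      apply hDne
      have hD₀bot : D₀ = ⊥ := by
        have := congrArg (Submodule.orderIsoMapComap eA) h
        rwa [OrderIso.apply_symm_apply, map_bot] at this
      rw [Submodule.eq_bot_iff]
      intro x hx
      have : (⟨x, hDker hx⟩ : ↥R) ∈ D₀ := hx
      rw [hD₀bot, Submodule.mem_bot] at this
      exact congrArg Subtype.val this
    · have hC₀bot : C₀ = ⊥ := by
        have := congrArg (Submodule.orderIsoMapComap eA) h
        rwa [OrderIso.apply_symm_apply, map_bot] at this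
      rw [Submodule.eq_bot_iff]
      rintro x ⟨hx1, hx2⟩
      have : (⟨x, hx2⟩ : ↥R) ∈ C₀ := ⟨hx1, hx2⟩
      rw [hC₀bot, Submodule.mem_bot] at this
      exact congrArg Subtype.val this
  -- build a section of g, contradiction
  set gC : ↥(LinearMap.range (θ ^ n)) →ₗ[Λ] U := g ∘ₗ (LinearMap.range (θ ^ n)).subtype with hgC
  have hbij : Function.Bijective gC := by
    constructor
    · intro x y hxy
      have : ((x : B) - (y : B)) ∈ LinearMap.range (θ ^ n) ⊓ R := by
        refine ⟨sub_mem x.2 y.2, ?_⟩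
        show ((x : B) - (y : B)) ∈ LinearMap.ker g
        rw [LinearMap.mem_ker, map_sub, sub_eq_zero]
        exact hxy
      rw [hCR, Submodule.mem_bot, sub_eq_zero] at this
      exact Subtype.ext this
    · intro u
      obtain ⟨x, hx⟩ := hgsurj u
      refine ⟨⟨(θ ^ n) x, LinearMap.mem_range_self _ x⟩, ?_⟩
      show g ((θ ^ n) x) = u
      rw [← hx]
      exact LinearMap.ext_iff.mp (hgpow n) x
  let eC := LinearEquiv.ofBijective gC hbij
  apply hnse
  refine ⟨(LinearMap.range (θ ^ n)).subtype ∘ₗ eC.symm.toLinearMap, ?_⟩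
  ext u
  show gC (eC.symm u) = u
  exact eC.apply_symm_apply u

theorem at_most_one_injective_component
    (K Λ A B U : Type) [Field K] [Ring Λ] [Algebra K Λ] [FiniteDimensional K Λ]
    [AddCommGroup A] [Module Λ A] [Module.Finite Λ A]
    [AddCommGroup B] [Module Λ B] [Module.Finite Λ B]
    [AddCommGroup U] [Module Λ U] [Module.Finite Λ U]
    (hU : IsUniserialModule Λ U)
    (f : A →ₗ[Λ] B) (g : B →ₗ[Λ] U) (hseq : IsAlmostSplitSequence f g)
    (I : Type) [DecidableEq I] (B' : I → Submodule Λ B)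
    (hint : DirectSum.IsInternal B')
    (hind : ∀ i, IsIndecomposableModule Λ ↥(B' i)) :
    ∀ i j : I, Function.Injective (g ∘ₗ (B' i).subtype) →
      Function.Injective (g ∘ₗ (B' j).subtype) → i = j := by
  intro i j hi hj
  by_contra hne
  rcases hU (LinearMap.range (g ∘ₗ (B' i).subtype)) (LinearMap.range (g ∘ₗ (B' j).subtype))
      with h | h
  · exact amoic_key K Λ A B U f g hseq I B' hint hind i j hne hj h
  · exact amoic_key K Λ A B U f g hseq I B' hint hind j i (Ne.symm hne) hi h
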